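/- For any real number λ with 0 ≤ λ ≤ 1, the quantity (1 + ((3/2)² − λ²) / max{λ², (1−λ)²}) is at most 9, with equality attained at λ = 1/2. -/
import Mathlib


theorem stmt_0 :
    (∀ l : ℝ, 0 ≤ l → l ≤ 1 →
      1 + ((3/2)^2 - l^2) / max (l^2) ((1-l)^2) ≤ 9) ∧
    1 + ((3/2)^2 - (1/2:ℝ)^2) / max ((1/2:ℝ)^2) ((1-(1/2:ℝ))^2) = 9 := by
  constructor
  · intro l h0 h1
    rcases le_total l (1/2) with hc | hc
    · have hmax : max (l^2) ((1-l)^2) = (1-l)^2 := by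
        apply max_eq_right
        nlinarith
      rw [hmax]
      have hpos : (0:ℝ) < (1-l)^2 := by nlinarith
      rw [show (9:ℝ)=1+8 by norm_num, add_le_add_iff_left, div_le_iff₀ hpos]
      nlinarith [sq_nonneg (l - 1/2)]
    · have hmax : max (l^2) ((1-l)^2) = l^2 := by
        apply max_eq_left
        nlinarith
      rw [hmax]
      have hpos : (0:ℝ) < l^2 := by nlinarith
      rw [show (9:ℝ)=1+8 by norm_num, add_le_add_iff_left, div_le_iff₀ hpos]
      nlinarith
  · norm_num
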